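/- Let d = 2 and define L₀ : ℝ² → ℝ̄ by L₀(x) = sup_{y ∈ ℝ²} ( ⟨x,y⟩ − max_{l ∈ {0,1,2}} ( ‖y‖_(l) − l ) ). Then for every x = (x₁,x₂) ∈ ℝ² with x₁² + x₂² < 1, |x₁| + (√2 − 1)|x₂| ≥ 1 and |x₁| > |x₂|, one has L₀(x₁,x₂) = (3 − |x₁|)/2 + x₂² / (2(1 − |x₁|)). -/

import Mathlib

noncomputable section

variable {d : ℕ}

/-- The projection `x_K` of `x` onto the coordinates in `K`
(the components outside `K` vanish). -/
def restr (K : Finset (Fin d)) (x : EuclideanSpace ℝ (Fin d)) : EuclideanSpace ℝ (Fin d) :=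
  WithLp.toLp 2 (fun i => if i ∈ K then x i else 0)

/-- The 2-k-symmetric gauge norm `‖y‖_(k) = sup {‖y_K‖ : |K| ≤ k}`
(equal to `0` for `k = 0`, by the convention `‖·‖_(0) = 0`). -/
def gaugeNorm (k : ℕ) (y : EuclideanSpace ℝ (Fin d)) : ℝ :=
  ⨆ K : {K : Finset (Fin d) // K.card ≤ k}, ‖restr (K : Finset (Fin d)) y‖

/-- The ℓ₀ pseudonorm: the number of nonzero components. -/
def l0 (x : EuclideanSpace ℝ (Fin d)) : ℕ :=
  (Finset.univ.filter fun i => x i ≠ 0).card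

open Classical in
/-- The Capra coupling `¢(x,y) = ⟨x,y⟩ / ‖x‖` for `x ≠ 0`, and `¢(0,y) = 0`. -/
def capra (x y : EuclideanSpace ℝ (Fin d)) : ℝ :=
  if x = 0 then 0 else (inner ℝ x y : ℝ) / ‖x‖

/-- The Capra conjugate of ℓ₀: `y ↦ max_{0 ≤ l ≤ d} (‖y‖_(l) − l)`. -/
def capraConjL0 (y : EuclideanSpace ℝ (Fin d)) : ℝ :=
  ⨆ l : Fin (d + 1), (gaugeNorm (l : ℕ) y - ((l : ℕ) : ℝ))

/-- `L₀(x) = sup_y (⟨x,y⟩ − max_{0 ≤ l ≤ d}(‖y‖_(l) − l))`, with values in `ℝ̄ = EReal`. -/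
def L0 (x : EuclideanSpace ℝ (Fin d)) : EReal :=
  ⨆ y : EuclideanSpace ℝ (Fin d), (((inner ℝ x y : ℝ) - capraConjL0 y : ℝ) : EReal)

/-- The k-support norm: the dual norm of the 2-k-symmetric gauge norm,
`‖y‖^sp_(k) = sup {⟨x,y⟩ : ‖x‖_(k) ≤ 1}`. -/
def suppNorm (k : ℕ) (y : EuclideanSpace ℝ (Fin d)) : ℝ :=
  sSup {c : ℝ | ∃ x : EuclideanSpace ℝ (Fin d), gaugeNorm k x ≤ 1 ∧ c = (inner ℝ x y : ℝ)}

/-- The unit ball of the k-support norm, with the convention `B^sp_(0) = {0}`. -/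
def Bsp (d k : ℕ) : Set (EuclideanSpace ℝ (Fin d)) :=
  if k = 0 then {0} else {y | suppNorm k y ≤ 1}

/-- The degenerate unit sphere `S_K = {x : x_{−K} = 0 and ‖x_K‖ = 1}`. -/
def sphK (K : Finset (Fin d)) : Set (EuclideanSpace ℝ (Fin d)) :=
  {x | (∀ i, i ∉ K → x i = 0) ∧ ‖restr K x‖ = 1}

/-- The degenerate unit ball `B_K = {x : x_{−K} = 0 and ‖x_K‖ ≤ 1}`. -/
def ballK (K : Finset (Fin d)) : Set (EuclideanSpace ℝ (Fin d)) :=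
  {x | (∀ i, i ∉ K → x i = 0) ∧ ‖restr K x‖ ≤ 1}


namespace L0Aux

lemma restr_apply (K : Finset (Fin d)) (y : EuclideanSpace ℝ (Fin d)) (i : Fin d) :
    restr K y i = if i ∈ K then y i else 0 := rfl

lemma norm_eq2 (y : EuclideanSpace ℝ (Fin 2)) : ‖y‖ = Real.sqrt ((y 0)^2 + (y 1)^2) := by
  simp [EuclideanSpace.norm_eq, Fin.sum_univ_two, Real.norm_eq_abs, sq_abs]

lemma restr_univ (y : EuclideanSpace ℝ (Fin d)) : restr Finset.univ y = y := by
  ext i; simp [restr]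

lemma restr_sq_le (K : Finset (Fin 2)) (y : EuclideanSpace ℝ (Fin 2)) (i : Fin 2) :
    (restr K y i)^2 ≤ (y i)^2 := by
  rw [restr_apply]; split
  · exact le_rfl
  · simpa using sq_nonneg (y i)

lemma norm_restr_le (K : Finset (Fin 2)) (y : EuclideanSpace ℝ (Fin 2)) :
    ‖restr K y‖ ≤ ‖y‖ := by
  rw [norm_eq2, norm_eq2]
  exact Real.sqrt_le_sqrt (add_le_add (restr_sq_le K y 0) (restr_sq_le K y 1))

lemma norm_restr_singleton_le (K : Finset (Fin 2)) (y : EuclideanSpace ℝ (Fin 2))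
    (i : Fin 2) (h : K ⊆ {i}) : ‖restr K y‖ ≤ max |y 0| |y 1| := by
  rw [norm_eq2]
  obtain ⟨iv, hlt⟩ := i
  interval_cases iv
  · have h1 : restr K y 1 = 0 := by
      rw [restr_apply]
      have : (1 : Fin 2) ∉ K := fun hm => by simpa using h hm
      simp [this]
    rw [h1]
    calc Real.sqrt ((restr K y 0)^2 + 0^2) ≤ Real.sqrt ((y 0)^2) := by
          apply Real.sqrt_le_sqrt; simpa using restr_sq_le K y 0
      _ = |y 0| := Real.sqrt_sq_eq_abs _
      _ ≤ _ := le_max_left _ _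
  · have h1 : restr K y 0 = 0 := by
      rw [restr_apply]
      have : (0 : Fin 2) ∉ K := fun hm => by simpa using h hm
      simp [this]
    rw [h1]
    calc Real.sqrt (0^2 + (restr K y 1)^2) ≤ Real.sqrt ((y 1)^2) := by
          apply Real.sqrt_le_sqrt; simpa using restr_sq_le K y 1
      _ = |y 1| := Real.sqrt_sq_eq_abs _
      _ ≤ _ := le_max_right _ _

instance (k : ℕ) : Nonempty {K : Finset (Fin 2) // K.card ≤ k} := ⟨⟨∅, by simp⟩⟩

lemma gauge_le (k : ℕ) (y : EuclideanSpace ℝ (Fin 2)) (c : ℝ)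
    (h : ∀ K : Finset (Fin 2), K.card ≤ k → ‖restr K y‖ ≤ c) : gaugeNorm k y ≤ c :=
  ciSup_le fun K => h K.1 K.2

lemma gauge_ge (k : ℕ) (y : EuclideanSpace ℝ (Fin 2)) (K : Finset (Fin 2)) (hK : K.card ≤ k) :
    ‖restr K y‖ ≤ gaugeNorm k y :=
  le_ciSup (f := fun K : {K : Finset (Fin 2) // K.card ≤ k} => ‖restr (K : Finset (Fin 2)) y‖)
    (Set.Finite.bddAbove (Set.finite_range _)) ⟨K, hK⟩

lemma gauge1_ge (y : EuclideanSpace ℝ (Fin 2)) : |y 0| ≤ gaugeNorm 1 y := by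
  have := gauge_ge 1 y {0} (by simp)
  refine le_trans (le_of_eq ?_) this
  rw [norm_eq2]
  rw [show restr {0} y 0 = y 0 by rw [restr_apply]; simp,
     show restr {0} y 1 = 0 by rw [restr_apply]; simp]
  rw [← Real.sqrt_sq_eq_abs]; ring_nf

lemma gauge2_ge (y : EuclideanSpace ℝ (Fin 2)) : ‖y‖ ≤ gaugeNorm 2 y := by
  have := gauge_ge 2 y Finset.univ (by simp)
  rwa [restr_univ] at this

lemma capra_ge (y : EuclideanSpace ℝ (Fin 2)) (l : Fin 3) :
    gaugeNorm (l : ℕ) y - ((l : ℕ) : ℝ) ≤ capraConjL0 y :=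
  le_ciSup (f := fun l : Fin 3 => gaugeNorm (l : ℕ) y - ((l : ℕ) : ℝ))
    (Set.Finite.bddAbove (Set.finite_range _)) l

lemma capra_le (y : EuclideanSpace ℝ (Fin 2)) (c : ℝ)
    (h : ∀ l : Fin 3, gaugeNorm (l : ℕ) y - ((l : ℕ) : ℝ) ≤ c) : capraConjL0 y ≤ c :=
  ciSup_le h

lemma cs_ineq0 (t s u v r : ℝ) (ht : 0 ≤ t) (hs : 0 ≤ s) (hr : 0 ≤ r)
    (hu : 0 ≤ u) (hv : 0 ≤ v)
    (hst : s^2 = 2*t+1) (hr2 : r^2 = u^2 + v^2) : t*u + s*v ≤ (t+1)*r := by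
  have hLR : 0 ≤ t*u + s*v + (t+1)*r := by positivity
  have e1 : (t+1)^2 * r^2 = (t+1)^2*(u^2+v^2) := by rw [hr2]
  have e2 : s^2*v^2 = (2*t+1)*v^2 := by rw [hst]
  have e3 : s^2*u^2 = (2*t+1)*u^2 := by rw [hst]
  have key : (t*u + s*v)^2 ≤ ((t+1)*r)^2 := by nlinarith [sq_nonneg (t*v - s*u), e1, e2, e3]
  calc t*u + s*v ≤ |t*u + s*v| := le_abs_self _
    _ = Real.sqrt ((t*u + s*v)^2) := (Real.sqrt_sq_eq_abs _).symm
    _ ≤ Real.sqrt (((t+1)*r)^2) := Real.sqrt_le_sqrt key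
    _ = (t+1)*r := by
        rw [Real.sqrt_sq_eq_abs]; exact abs_of_nonneg (by positivity)

lemma cs_ineq (t s u v r : ℝ) (ht : 0 ≤ t) (hs : 0 ≤ s) (hr : 0 ≤ r)
    (hst : s^2 = 2*t+1) (hr2 : r^2 = u^2 + v^2) : t*|u| + s*|v| ≤ (t+1)*r := by
  apply cs_ineq0 t s |u| |v| r ht hs hr (abs_nonneg u) (abs_nonneg v) hst
  rw [hr2, sq_abs, sq_abs]

lemma upper_core (a s t lam u v r g : ℝ)
    (h1a : 0 ≤ 1 - a)
    (hlam0 : 0 ≤ lam) (hlam1 : lam ≤ 1)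
    (hlam : lam = 1 - (1-a)*(t+1))
    (hg1 : |u| - 1 ≤ g) (hg2 : r - 2 ≤ g)
    (hCS : t*|u| + s*|v| ≤ (t+1)*r) :
    (lam + (1-a)*t)*|u| + s*(1-a)*|v| - g ≤ 2 - lam := by
  have hCS' : (1-a)*(t*|u| + s*|v|) ≤ (1-a)*((t+1)*r) := mul_le_mul_of_nonneg_left hCS h1a
  have k1 := mul_le_mul_of_nonneg_left hg1 hlam0
  have k2 := mul_le_mul_of_nonneg_left hg2 (by linarith : (0:ℝ) ≤ 1 - lam)
  subst hlam
  nlinarith [hCS', k1, k2]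

end L0Aux

open L0Aux
set_option maxHeartbeats 1000000

/-- in dimension `d = 2`, for `x` with `x₁² + x₂² < 1`,
`|x₁| + (√2 − 1)|x₂| ≥ 1` and `|x₁| > |x₂|`, one has
`L₀(x₁,x₂) = (3 − |x₁|)/2 + x₂²/(2(1 − |x₁|))`. -/
theorem L0_formula_dim2_nail (x : EuclideanSpace ℝ (Fin 2))
    (h1 : (x 0) ^ 2 + (x 1) ^ 2 < 1)
    (h2 : 1 ≤ |x 0| + (Real.sqrt 2 - 1) * |x 1|)
    (h3 : |x 1| < |x 0|) :
    L0 x = (((3 - |x 0|) / 2 + (x 1) ^ 2 / (2 * (1 - |x 0|)) : ℝ) : EReal) := by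
  classical
  set w := Real.sqrt 2 with hw_def
  have hw2 : w^2 = 2 := Real.sq_sqrt (by norm_num)
  have hw1 : 1 < w := by nlinarith [Real.sqrt_nonneg 2]
  set a := |x 0| with ha_def
  set b := |x 1| with hb_def
  have hb0 : (0:ℝ) ≤ b := abs_nonneg _
  have ha0 : (0:ℝ) ≤ a := abs_nonneg _
  have habs : a^2 + b^2 < 1 := by rw [ha_def, hb_def, sq_abs, sq_abs]; exact h1
  have ha1 : a < 1 := by nlinarith
  have h1a : (0:ℝ) < 1 - a := by linarith
  have hbpos : (0:ℝ) < b := by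
    rcases lt_or_eq_of_le hb0 with h | h
    · exact h
    · exfalso; rw [← h] at h2; simp at h2; linarith
  have hapos : (0:ℝ) < a := lt_of_le_of_lt hb0 h3
  set s := b / (1 - a) with hs_def
  have hs_pos : 0 < s := div_pos hbpos h1a
  have hbs : b = s * (1 - a) := by rw [hs_def, div_mul_cancel₀ _ h1a.ne']
  have hs_ge : 1 + w ≤ s := by
    have h2' : 1 - a ≤ (w - 1) * (s * (1 - a)) := by rw [← hbs]; linarith
    have h3' : 1 ≤ (w - 1) * s := by nlinarith
    nlinarith
  set t := (s^2 - 1)/2 with ht_def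
  have hst : s^2 = 2*t + 1 := by rw [ht_def]; ring
  have hts : s ≤ t := by nlinarith
  have ht1 : 1 ≤ t := by nlinarith
  set lam := 1 - (1-a)*(t+1) with hlam_def
  have hb2 : b^2 = s^2*(1-a)^2 := by rw [hbs]; ring
  have h5 : s^2*(1-a)^2 < (1-a)*(1+a) := by nlinarith [hb2, habs]
  have h6 : (1-a)*(s^2+1) < 2 := by nlinarith [h5, h1a, mul_pos h1a h1a]
  have hlam0 : 0 ≤ lam := by
    rw [hlam_def, ht_def]
    nlinarith [h6]
  have hlam1 : lam ≤ 1 := by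
    rw [hlam_def]
    nlinarith [mul_nonneg (le_of_lt h1a) (by linarith : (0:ℝ) ≤ t + 1)]
  set V := (3 - a)/2 + b^2/(2*(1-a)) with hV_def
  have hV2 : V = 2 - lam := by
    rw [hV_def, hlam_def, hb2, ht_def]; field_simp; ring
  -- the maximizer
  have hx0ne : x 0 ≠ 0 := abs_pos.mp hapos
  have hx1ne : x 1 ≠ 0 := abs_pos.mp hbpos
  set ys : EuclideanSpace ℝ (Fin 2) := WithLp.toLp 2 (fun i : Fin 2 => if i = 0 then (x 0 / a) * t else (x 1 / b) * s)
    with hys_def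
  have hys0 : ys 0 = (x 0 / a) * t := by rw [hys_def]; simp
  have hys1 : ys 1 = (x 1 / b) * s := by rw [hys_def]; simp
  have hx0sq : (x 0)^2 = a^2 := (sq_abs (x 0)).symm
  have hx1sq : (x 1)^2 = b^2 := (sq_abs (x 1)).symm
  have hane : a ≠ 0 := ne_of_gt hapos
  have hbne : b ≠ 0 := ne_of_gt hbpos
  have hys0sq : (ys 0)^2 = t^2 := by
    rw [hys0, mul_pow, div_pow, hx0sq, div_self (by positivity), one_mul]
  have hys1sq : (ys 1)^2 = s^2 := by
    rw [hys1, mul_pow, div_pow, hx1sq, div_self (by positivity), one_mul]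
  have habs_ys0 : |ys 0| = t := by
    rw [← Real.sqrt_sq_eq_abs, hys0sq, Real.sqrt_sq (by linarith)]
  have habs_ys1 : |ys 1| = s := by
    rw [← Real.sqrt_sq_eq_abs, hys1sq, Real.sqrt_sq (by linarith)]
  have hnys : ‖ys‖ = t + 1 := by
    rw [norm_eq2, hys0sq, hys1sq, hst, show t^2 + (2*t+1) = (t+1)^2 by ring,
      Real.sqrt_sq (by linarith)]
  have hinner : (inner ℝ x ys : ℝ) = a*t + b*s := by
    have e0 : x 0 * (x 0 / a * t) = a * t := by
      rw [show x 0 * (x 0 / a * t) = (x 0)^2 / a * t by ring, hx0sq, sq, mul_self_div_self]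
    have e1 : x 1 * (x 1 / b * s) = b * s := by
      rw [show x 1 * (x 1 / b * s) = (x 1)^2 / b * s by ring, hx1sq, sq, mul_self_div_self]
    simp only [PiLp.inner_apply, RCLike.inner_apply, conj_trivial, Fin.sum_univ_two]
    rw [hys0, hys1]; rw [mul_comm (x 0), mul_comm (x 1)] at *; rw [e0, e1]
  -- upper bound on capraConjL0 ys
  have hcys : capraConjL0 ys ≤ t - 1 := by
    apply capra_le
    intro l
    fin_cases l
    · simp only [Fin.val_zero, Nat.cast_zero, sub_zero]
      have : gaugeNorm 0 ys ≤ 0 := by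
        apply gauge_le
        intro K hK
        have : K = ∅ := Finset.card_eq_zero.mp (Nat.le_zero.mp hK)
        subst this
        have : restr (∅ : Finset (Fin 2)) ys = 0 := by ext i; simp [restr]
        rw [this, norm_zero]
      linarith
    · simp only [Fin.val_one, Nat.cast_one]
      have : gaugeNorm 1 ys ≤ t := by
        apply gauge_le
        intro K hK
        obtain ⟨i, hi⟩ := Finset.card_le_one_iff_subset_singleton.mp hK
        refine le_trans (norm_restr_singleton_le K ys i hi) ?_
        rw [habs_ys0, habs_ys1]
        exact max_le le_rfl hts
      linarith
    · simp only [Fin.val_two, Nat.cast_ofNat]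
      have : gaugeNorm 2 ys ≤ t + 1 := by
        apply gauge_le
        intro K _
        rw [← hnys]; exact norm_restr_le K ys
      linarith
  -- the upper bound, for every y
  have hupper : ∀ y : EuclideanSpace ℝ (Fin 2), (inner ℝ x y : ℝ) - capraConjL0 y ≤ V := by
    intro y
    set g := capraConjL0 y with hg_def
    set u := y 0
    set v := y 1
    set r := ‖y‖ with hr_def
    have hg1 : |u| - 1 ≤ g := by
      have h := capra_ge y 1
      simp only [Fin.val_one, Nat.cast_one] at h
      have := gauge1_ge y
      linarith
    have hg2 : r - 2 ≤ g := by
      have h := capra_ge y 2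
      simp only [Fin.val_two, Nat.cast_ofNat] at h
      have := gauge2_ge y
      linarith
    have hr2 : r^2 = u^2 + v^2 := by
      rw [hr_def, norm_eq2]; exact Real.sq_sqrt (by positivity)
    have hrnn : 0 ≤ r := norm_nonneg _
    have hCS : t*|u| + s*|v| ≤ (t+1)*r :=
      cs_ineq t s u v r (by linarith) (le_of_lt hs_pos) hrnn hst hr2
    have hxu : x 0 * u ≤ a * |u| := by
      rw [ha_def, ← abs_mul]; exact le_abs_self _
    have hxv : x 1 * v ≤ b * |v| := by
      rw [hb_def, ← abs_mul]; exact le_abs_self _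
    have hinxy : (inner ℝ x y : ℝ) = x 0 * u + x 1 * v := by
      simp [PiLp.inner_apply, RCLike.inner_apply, Fin.sum_univ_two, mul_comm]; rfl
    have ha_id : a = lam + (1-a)*t := by rw [hlam_def]; ring
    rw [hinxy, hV2]
    -- a*|u| + b*|v| - g ≤ 2 - lam
    have hfin : a*|u| + b*|v| - g ≤ 2 - lam := by
      rw [ha_id, hbs]
      exact upper_core a s t lam u v r g (le_of_lt h1a) hlam0 hlam1 hlam_def hg1 hg2 hCS
    linarith
  -- value at the maximizer
  have hlow : V ≤ (inner ℝ x ys : ℝ) - capraConjL0 ys := by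
    rw [hinner]
    have hval : a*t + b*s - V = t - 1 := by
      rw [hV2, hlam_def, hbs, ht_def]; ring
    linarith
  -- final EReal equality
  have hVgoal : ((3 - a) / 2 + (x 1) ^ 2 / (2 * (1 - a)) : ℝ) = V := by
    rw [hx1sq, hV_def]
  rw [hVgoal, L0]
  apply le_antisymm
  · exact iSup_le fun y => EReal.coe_le_coe_iff.mpr (hupper y)
  · calc ((V : ℝ) : EReal) ≤ (((inner ℝ x ys : ℝ) - capraConjL0 ys : ℝ) : EReal) :=
          EReal.coe_le_coe_iff.mpr hlow
      _ ≤ _ := le_iSup (fun y : EuclideanSpace ℝ (Fin 2) =>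
          (((inner ℝ x y : ℝ) - capraConjL0 y : ℝ) : EReal)) ys
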